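/- arXiv:2109.08559 — 4 statements merged into one kernel-verified Lean document; each statement's English description precedes it below -/
import Mathlib

section
/- Let (Z, δ) be a compact metric space, let (z_i)_{i∈ℕ} be a dense sequence in Z, let G be a subgroup of the group of homeomorphisms of Z (acting on Z by evaluation), and let d be a right-invariant metric on G, i.e., d(h₁ ∘ g, h₂ ∘ g) = d(h₁, h₂) for all h₁, h₂, g ∈ G. Then for all z, z' ∈ Z the following are equivalent: (i) there exists a bijection f : G → G which is an isometry for d and satisfies δ(f(h)(z'), z_i) = δ(h(z), z_i) for all h ∈ G and all i ∈ ℕ; (ii) z and z' lie in the same G-orbit, i.e., there exists g ∈ G with g(z') = z. -/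
lemma eq_of_forall_dist_eq' {Z : Type} [MetricSpace Z]
    (z : ℕ → Z) (hz : DenseRange z) (a b : Z)
    (h : ∀ i, dist a (z i) = dist b (z i)) : a = b := by
  have hle : dist a b ≤ 0 := by
    refine le_of_forall_pos_le_add ?_
    intro ε hε
    obtain ⟨i, hi⟩ := hz.exists_dist_lt b (half_pos hε)
    calc dist a b ≤ dist a (z i) + dist (z i) b := dist_triangle _ _ _
      _ = dist b (z i) + dist (z i) b := by rw [h i]
      _ = dist (z i) b + dist (z i) b := by rw [dist_comm]
      _ ≤ ε/2 + ε/2 := by rw [dist_comm]; linarith [hi.le]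
      _ = 0 + ε := by ring
  exact dist_le_zero.mp hle

theorem isom_of_structures_iff_same_orbit
    {Z : Type} [MetricSpace Z] [CompactSpace Z]
    (z : ℕ → Z) (hz : DenseRange z)
    (G : Set (Z ≃ₜ Z))
    (hone : Homeomorph.refl Z ∈ G)
    (hcomp : ∀ g h : Z ≃ₜ Z, g ∈ G → h ∈ G → g.trans h ∈ G)
    (hsymm : ∀ g : Z ≃ₜ Z, g ∈ G → g.symm ∈ G)
    (d : ↥G → ↥G → ℝ)
    (hd0 : ∀ a b : ↥G, d a b = 0 ↔ a = b)
    (hdsymm : ∀ a b : ↥G, d a b = d b a)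
    (hdtri : ∀ a b c : ↥G, d a c ≤ d a b + d b c)
    (hdinv : ∀ h₁ h₂ g : ↥G,
      d ⟨(g : Z ≃ₜ Z).trans (h₁ : Z ≃ₜ Z), hcomp _ _ g.2 h₁.2⟩
        ⟨(g : Z ≃ₜ Z).trans (h₂ : Z ≃ₜ Z), hcomp _ _ g.2 h₂.2⟩ = d h₁ h₂)
    (x x' : Z) :
    (∃ f : ↥G → ↥G,
      Function.Bijective f ∧
      (∀ h₁ h₂ : ↥G, d (f h₁) (f h₂) = d h₁ h₂) ∧
      (∀ (h : ↥G) (i : ℕ), dist ((f h : Z ≃ₜ Z) x') (z i) = dist ((h : Z ≃ₜ Z) x) (z i))) ↔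
    ∃ g : ↥G, (g : Z ≃ₜ Z) x' = x := by
  constructor
  · rintro ⟨f, -, -, hfd⟩
    refine ⟨f ⟨Homeomorph.refl Z, hone⟩, ?_⟩
    have := eq_of_forall_dist_eq' z hz ((f ⟨Homeomorph.refl Z, hone⟩ : Z ≃ₜ Z) x')
      ((Homeomorph.refl Z) x) (hfd ⟨Homeomorph.refl Z, hone⟩)
    simpa using this
  · rintro ⟨g, hg⟩
    refine ⟨fun h => ⟨(g : Z ≃ₜ Z).trans h, hcomp _ _ g.2 h.2⟩, ?_, fun h₁ h₂ => hdinv h₁ h₂ g, ?_⟩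
    · constructor
      · intro a b hab
        have := congrArg Subtype.val hab
        simp only at this
        ext y
        have := congrArg (fun e : Z ≃ₜ Z => e ((g : Z ≃ₜ Z).symm y)) this
        simpa using this
      · intro b
        refine ⟨⟨(g : Z ≃ₜ Z).symm.trans b, hcomp _ _ (hsymm _ g.2) b.2⟩, ?_⟩
        ext y
        simp
    · intro h i
      simp [hg]
end

section
/- Let (Z, d) be a locally compact metric space. Then for every z₀ ∈ Z the pseudo-component C[z₀] is both open and closed in Z. In particular, every nonempty connected locally compact metric space is pseudo-connected. -/
noncomputable def rho {Z : Type*} [PseudoMetricSpace Z] (z : Z) : ENNReal :=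
  ⨆ (r : NNReal) (_ : IsCompact (Metric.closedBall z (r : ℝ))), (r : ENNReal)

def pseudoComponent {Z : Type*} [PseudoMetricSpace Z] (z₀ : Z) : Set Z :=
  {z | ∃ (n : ℕ) (w : ℕ → Z), w 0 = z₀ ∧ w n = z ∧
    ∀ i < n, ENNReal.ofReal (dist (w i) (w (i + 1))) < rho (w i)}

def PseudoConnected (Z : Type*) [PseudoMetricSpace Z] : Prop :=
  ∀ z₀ : Z, pseudoComponent z₀ = Set.univ

lemma ofReal_le_rho {Z : Type*} [PseudoMetricSpace Z] {z : Z} {r : ℝ}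
    (hc : IsCompact (Metric.closedBall z r)) : ENNReal.ofReal r ≤ rho z := by
  rcases le_or_gt r 0 with h | h
  · simp [ENNReal.ofReal_eq_zero.2 h]
  · have : ((r.toNNReal : ℝ)) = r := Real.coe_toNNReal r h.le
    refine le_iSup₂_of_le r.toNNReal (by rwa [this]) ?_
    simp [ENNReal.ofReal]

lemma mem_extend {Z : Type*} [PseudoMetricSpace Z] {z₀ z t : Z}
    (hz : z ∈ pseudoComponent z₀)
    (ht : ENNReal.ofReal (dist z t) < rho z) : t ∈ pseudoComponent z₀ := by
  obtain ⟨n, w, h0, hn, hstep⟩ := hz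
  refine ⟨n + 1, fun i => if i ≤ n then w i else t, ?_, ?_, ?_⟩
  · simp [h0]
  · simp
  · intro i hi
    rcases lt_or_ge i n with h | h
    · simpa [h.le, Nat.succ_le_of_lt h] using hstep i h
    · have : i = n := by omega
      subst this
      simpa [hn] using ht

theorem pseudoComponent_isOpen_isClosed
    {Z : Type} [MetricSpace Z] [LocallyCompactSpace Z] :
    (∀ z₀ : Z, IsOpen (pseudoComponent z₀) ∧ IsClosed (pseudoComponent z₀)) ∧
    (ConnectedSpace Z → PseudoConnected Z) := by
  have key : ∀ z₀ : Z, IsOpen (pseudoComponent z₀) ∧ IsClosed (pseudoComponent z₀) := by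
    intro z₀
    constructor
    · rw [Metric.isOpen_iff]
      intro z hz
      obtain ⟨r, hr, hc⟩ := Metric.exists_isCompact_closedBall z
      refine ⟨r, hr, fun t ht => ?_⟩
      refine mem_extend hz (lt_of_lt_of_le ?_ (ofReal_le_rho hc))
      exact ENNReal.ofReal_lt_ofReal_iff_of_nonneg dist_nonneg |>.2 (by rw [dist_comm]; exact ht)
    · rw [← isSeqClosed_iff_isClosed]
      intro u z hu hlim
      obtain ⟨r, hr, hc⟩ := Metric.exists_isCompact_closedBall z
      obtain ⟨N, hN⟩ := Metric.tendsto_atTop.1 hlim (r / 3) (by linarith)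
      have hd : dist (u N) z < r / 3 := hN N le_rfl
      have hsub : Metric.closedBall (u N) (r / 3) ⊆ Metric.closedBall z r := by
        intro x hx
        simp only [Metric.mem_closedBall] at *
        have := dist_triangle x (u N) z
        linarith
      have hc' : IsCompact (Metric.closedBall (u N) (r / 3)) :=
        hc.of_isClosed_subset Metric.isClosed_closedBall hsub
      refine mem_extend (hu N) (lt_of_lt_of_le ?_ (ofReal_le_rho hc'))
      exact ENNReal.ofReal_lt_ofReal_iff_of_nonneg dist_nonneg |>.2 hd
  refine ⟨key, fun hconn z₀ => ?_⟩
  have hne : (pseudoComponent z₀).Nonempty :=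
    ⟨z₀, 0, fun _ => z₀, rfl, rfl, by simp⟩
  exact IsClopen.eq_univ ⟨(key z₀).2, (key z₀).1⟩ hne
end

section
/- Let (Z, d) be a metric space, let b ∈ Z, and let 0 ≤ r < r' be real numbers such that the closed ball B'_{r'}(b) = {x ∈ Z : d(x,b) ≤ r'} is compact. Then for every ε > 0 there exists δ > 0 such that every x ∈ Z with d(x, b) ≤ r + δ satisfies inf{d(x, y) : y ∈ B'_r(b)} < ε, where B'_r(b) = {y ∈ Z : d(y,b) ≤ r}. -/
theorem infDist_closedBall_small_of_compact
    {Z : Type} [MetricSpace Z] (b : Z) (r r' : ℝ) (hr : 0 ≤ r) (hrr' : r < r')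
    (hc : IsCompact (Metric.closedBall b r')) :
    ∀ ε : ℝ, 0 < ε → ∃ δ : ℝ, 0 < δ ∧
      ∀ x : Z, dist x b ≤ r + δ → Metric.infDist x (Metric.closedBall b r) < ε := by
  intro ε hε
  by_contra h
  push_neg at h
  -- choose a sequence
  have hsub : 0 < r' - r := by linarith
  have hx : ∀ n : ℕ, ∃ x : Z, dist x b ≤ r + min ((1:ℝ)/(n+1)) (r'-r) ∧
      ε ≤ Metric.infDist x (Metric.closedBall b r) := by
    intro n
    have hpos : 0 < min ((1:ℝ)/(n+1)) (r'-r) := by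
      apply lt_min _ hsub
      positivity
    obtain ⟨x, hx1, hx2⟩ := h _ hpos
    exact ⟨x, hx1, hx2⟩
  choose u hu1 hu2 using hx
  have humem : ∀ n, u n ∈ Metric.closedBall b r' := by
    intro n
    have := hu1 n
    have : dist (u n) b ≤ r + (r' - r) := le_trans this (by gcongr; exact min_le_right _ _)
    simpa [Metric.mem_closedBall] using by linarith
  obtain ⟨x, hxmem, φ, hφ, hlim⟩ := hc.tendsto_subseq humem
  -- dist x b ≤ r
  have hdu : Filter.Tendsto (fun n => dist (u (φ n)) b) Filter.atTop (nhds (dist x b)) :=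
    ((continuous_dist.comp (Continuous.prodMk continuous_id continuous_const)).continuousAt.tendsto.comp hlim)
  have hle : dist x b ≤ r := by
    have hb : Filter.Tendsto (fun n : ℕ => r + min ((1:ℝ)/(φ n+1)) (r'-r)) Filter.atTop (nhds r) := by
      have h1 : Filter.Tendsto (fun n : ℕ => (1:ℝ)/(φ n+1)) Filter.atTop (nhds 0) := by
        apply tendsto_one_div_add_atTop_nhds_zero_nat.comp
        exact hφ.tendsto_atTop
      have h2 : Filter.Tendsto (fun n : ℕ => min ((1:ℝ)/(φ n+1)) (r'-r)) Filter.atTop (nhds 0) := by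
        have := h1.min (tendsto_const_nhds (x := r'-r))
        simpa [min_eq_left hsub.le] using this
      simpa using tendsto_const_nhds.add h2
    exact le_of_tendsto_of_tendsto hdu hb (Filter.Eventually.of_forall fun n => hu1 (φ n))
  have hxball : x ∈ Metric.closedBall b r := by simpa [Metric.mem_closedBall] using hle
  have hinf0 : Metric.infDist x (Metric.closedBall b r) = 0 :=
    Metric.infDist_zero_of_mem hxball
  have hcont : Filter.Tendsto (fun n => Metric.infDist (u (φ n)) (Metric.closedBall b r))
      Filter.atTop (nhds (Metric.infDist x (Metric.closedBall b r))) :=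
    ((Metric.continuous_infDist_pt _).continuousAt.tendsto.comp hlim)
  have : ε ≤ Metric.infDist x (Metric.closedBall b r) :=
    le_of_tendsto_of_tendsto tendsto_const_nhds hcont
      (Filter.Eventually.of_forall fun n => hu2 (φ n))
  rw [hinf0] at this
  linarith
end

section
/- Let X be a complete metric space, let S ⊆ X be a dense subset, let x ∈ X and let r ∈ [0,∞). Then ρ(x) > r if and only if there exists r' > r such that the set {s ∈ S : d(s, x) < r'} is totally bounded. -/
theorem rho_gt_iff_totallyBounded_dense
    {X : Type} [MetricSpace X] [CompleteSpace X] (S : Set X) (hS : Dense S)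
    (x : X) (r : ℝ) (hr : 0 ≤ r) :
    ENNReal.ofReal r < rho x ↔
      ∃ r' : ℝ, r < r' ∧ TotallyBounded {s : X | s ∈ S ∧ dist s x < r'} := by
  constructor
  · intro h
    rw [rho, lt_iSup_iff] at h
    obtain ⟨r0, h⟩ := h
    have hP : IsCompact (Metric.closedBall x (r0 : ℝ)) := by
      by_contra hc
      simp [hc] at h
    rw [iSup_pos hP, ENNReal.ofReal_lt_coe_iff hr] at h
    refine ⟨r0, h, ?_⟩
    refine TotallyBounded.subset ?_ hP.totallyBounded
    intro s hs
    exact Metric.mem_closedBall.2 hs.2.le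
  · rintro ⟨r', hrr', htb⟩
    set r'' : ℝ := (r + r') / 2 with hr''
    have h1 : r < r'' := by simp [hr'']; linarith
    have h2 : r'' < r' := by simp [hr'']; linarith
    have h0 : 0 ≤ r'' := le_trans hr h1.le
    have hsub : Metric.closedBall x r'' ⊆ closure {s : X | s ∈ S ∧ dist s x < r'} := by
      intro y hy
      rw [Metric.mem_closure_iff]
      intro ε hε
      have hmin : (0:ℝ) < min ε (r' - r'') := lt_min hε (by linarith)
      obtain ⟨s, hs1, hs2⟩ := Metric.dense_iff.1 hS y (min ε (r' - r'')) hmin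
      refine ⟨s, ⟨hs2, ?_⟩, ?_⟩
      · have : dist s y < r' - r'' := lt_of_lt_of_le (Metric.mem_ball.1 hs1) (min_le_right _ _)
        have hyx : dist y x ≤ r'' := Metric.mem_closedBall.1 hy
        calc dist s x ≤ dist s y + dist y x := dist_triangle _ _ _
          _ < (r' - r'') + r'' := by linarith
          _ = r' := by ring
      · have : dist s y < ε := lt_of_lt_of_le (Metric.mem_ball.1 hs1) (min_le_left _ _)
        rwa [dist_comm]
    have hcomp : IsCompact (Metric.closedBall x r'') :=
      IsCompact.of_isClosed_subset (TotallyBounded.isCompact_of_isClosed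
        htb.closure isClosed_closure) Metric.isClosed_closedBall hsub
    set r0 : NNReal := ⟨r'', h0⟩ with hr0
    have hc0 : IsCompact (Metric.closedBall x (r0 : ℝ)) := hcomp
    have hle : (r0 : ENNReal) ≤ rho x :=
      le_iSup₂ (f := fun (t : NNReal) (_ : IsCompact (Metric.closedBall x (t : ℝ))) =>
        (t : ENNReal)) r0 hc0
    refine lt_of_lt_of_le ?_ hle
    rw [ENNReal.ofReal_lt_coe_iff hr]
    exact h1
end
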